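/- For every nonnegative integer n ≥ 1, the Cassini identity W_{n-1}·W_{n+1} − W_n² = (−q)^{n−1}·(W_0·W_2 − W_1²) holds (note the order of factors matters since quaternion multiplication is non-commutative). -/

import Mathlib

open Quaternion

theorem stmt1 (p q : ℝ) (w : ℕ → ℝ) (hw : ∀ n, w (n + 2) = p * w (n + 1) + q * w n)
    (W : ℕ → ℍ[ℝ]) (hW : ∀ n, W n = ⟨w n, w (n + 1), w (n + 2), w (n + 3)⟩)
    (n : ℕ) (hn : 1 ≤ n) :
    W (n - 1) * W (n + 1) - (W n) ^ 2 =
      ((-q) ^ (n - 1)) • (W 0 * W 2 - (W 1) ^ 2) := by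
  have hWrec : ∀ m, W (m + 2) = p • W (m + 1) + q • W m := by
    intro m
    simp only [hW]
    ext <;>
      simp only [Quaternion.re_add, Quaternion.imI_add, Quaternion.imJ_add,
        Quaternion.imK_add, Quaternion.re_smul, Quaternion.imI_smul,
        Quaternion.imJ_smul, Quaternion.imK_smul, smul_eq_mul] <;>
      first
        | exact hw m | exact hw (m + 1) | exact hw (m + 2) | exact hw (m + 3)
  induction n, hn using Nat.le_induction with
  | base => simp
  | succ m hm ih =>
    obtain ⟨k, rfl⟩ : ∃ k, m = k + 1 := ⟨m - 1, (Nat.succ_pred_eq_of_pos hm).symm⟩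
    have hc : W (k + 2) = p • W (k + 1) + q • W k := hWrec k
    have hd : W (k + 3) = p • W (k + 2) + q • W (k + 1) := hWrec (k + 1)
    have key : W (k + 1) * W (k + 3) - W (k + 2) ^ 2 =
        (-q) • (W k * W (k + 2) - W (k + 1) ^ 2) := by
      rw [hd, sq, sq]
      nth_rewrite 2 [hc]
      rw [mul_add, mul_smul_comm, mul_smul_comm, add_mul, smul_mul_assoc, smul_mul_assoc]
      module
    show W (k + 1) * W (k + 3) - W (k + 2) ^ 2 = (-q) ^ (k + 1) • (W 0 * W 2 - W 1 ^ 2)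
    simp only [Nat.add_sub_cancel] at ih
    rw [key, ih, smul_smul, ← pow_succ']
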